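/- For every real number w with 0 ≤ w < 1, one has 2w ≤ w/(1−w) − log(1−w) ≤ 2w + 3w²/(2(1−w)). -/

import Mathlib

private lemma aux_hasDerivAt (x : ℝ) (hx : x < 1) :
    HasDerivAt (fun t : ℝ => Real.log (1 - t) + t + t ^ 2 / (2 * (1 - t)))
      (x ^ 2 / (2 * (1 - x) ^ 2)) x := by
  have hne : (1 : ℝ) - x ≠ 0 := by linarith
  have h1 : HasDerivAt (fun t : ℝ => 1 - t) (-1) x := by
    simpa using (hasDerivAt_id' x).const_sub (1 : ℝ)
  have hlog : HasDerivAt (fun t : ℝ => Real.log (1 - t)) (-1 / (1 - x)) x :=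
    h1.log hne
  have hsq : HasDerivAt (fun t : ℝ => t ^ 2) (2 * x) x := by
    simpa using hasDerivAt_pow 2 x
  have hden : HasDerivAt (fun t : ℝ => 2 * (1 - t)) (-2) x := by
    simpa using h1.const_mul (2 : ℝ)
  have hdenne : 2 * (1 - x) ≠ 0 := by positivity
  have hdiv : HasDerivAt (fun t : ℝ => t ^ 2 / (2 * (1 - t)))
      ((2 * x * (2 * (1 - x)) - x ^ 2 * (-2)) / (2 * (1 - x)) ^ 2) x :=
    hsq.div hden hdenne
  have : HasDerivAt (fun t : ℝ => Real.log (1 - t) + t + t ^ 2 / (2 * (1 - t)))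
      (-1 / (1 - x) + 1 + (2 * x * (2 * (1 - x)) - x ^ 2 * (-2)) / (2 * (1 - x)) ^ 2) x :=
    (hlog.add (hasDerivAt_id x)).add hdiv
  convert this using 1
  field_simp
  ring

private lemma aux_log_bound (w : ℝ) (h0 : 0 ≤ w) (h1 : w < 1) :
    -Real.log (1 - w) ≤ w + w ^ 2 / (2 * (1 - w)) := by
  set f : ℝ → ℝ := fun t => Real.log (1 - t) + t + t ^ 2 / (2 * (1 - t)) with hf
  have hmem : ∀ x ∈ Set.Icc (0 : ℝ) w, x < 1 := fun x hx => lt_of_le_of_lt hx.2 h1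
  have hcont : ContinuousOn f (Set.Icc 0 w) := fun x hx =>
    ((aux_hasDerivAt x (hmem x hx)).differentiableAt.continuousAt).continuousWithinAt
  have hderiv : ∀ x ∈ interior (Set.Icc (0 : ℝ) w), 0 ≤ deriv f x := by
    intro x hx
    have hx' : x ∈ Set.Icc (0 : ℝ) w := interior_subset hx
    rw [(aux_hasDerivAt x (hmem x hx')).deriv]
    have : (0:ℝ) < 1 - x := by have := hmem x hx'; linarith
    positivity
  have hdiff : ∀ x ∈ interior (Set.Icc (0 : ℝ) w), DifferentiableAt ℝ f x := fun x hx =>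
    (aux_hasDerivAt x (hmem x (interior_subset hx))).differentiableAt
  have hmono : MonotoneOn f (Set.Icc 0 w) :=
    monotoneOn_of_deriv_nonneg (convex_Icc 0 w) hcont
      (fun x hx => (hdiff x hx).differentiableWithinAt) hderiv
  have h0w : (0:ℝ) ∈ Set.Icc (0:ℝ) w := ⟨le_refl 0, h0⟩
  have hww : w ∈ Set.Icc (0:ℝ) w := ⟨h0, le_refl w⟩
  have := hmono h0w hww h0
  have hf0 : f 0 = 0 := by simp [hf]
  rw [hf0] at this
  have : 0 ≤ Real.log (1 - w) + w + w ^ 2 / (2 * (1 - w)) := this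
  linarith

/-- Two-sided bound `2w ≤ w/(1−w) − log(1−w) ≤ 2w + 3w²/(2(1−w))` for `0 ≤ w < 1`. -/
theorem two_sided_log_bound (w : ℝ) (h0 : 0 ≤ w) (h1 : w < 1) :
    2 * w ≤ w / (1 - w) - Real.log (1 - w) ∧
      w / (1 - w) - Real.log (1 - w) ≤ 2 * w + 3 * w ^ 2 / (2 * (1 - w)) := by
  have hpos : (0:ℝ) < 1 - w := by linarith
  constructor
  · have hlog : Real.log (1 - w) ≤ (1 - w) - 1 := Real.log_le_sub_one_of_pos hpos
    have hdiv : w ≤ w / (1 - w) := by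
      rw [le_div_iff₀ hpos]
      nlinarith
    linarith
  · have hb := aux_log_bound w h0 h1
    have heq : w / (1 - w) + (w + w ^ 2 / (2 * (1 - w)))
        = 2 * w + 3 * w ^ 2 / (2 * (1 - w)) := by
      field_simp
      ring
    linarith
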